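/- For every integer d ≥ 0, the rational function Φ_d(w) = (∏_{r=0}^{6d}(6w+r))/(∏_{r=0}^{d}(w+r)⁵·∏_{r=1}^{d}(2w+2r−1)) ∈ ℚ(w) is invariant under the substitution w ↦ −w−d, i.e. Φ_d(−w−d) = Φ_d(w). -/
import Mathlib


/-!
Statement 7: for every d ≥ 0, the rational function
Φ_d(w) = (∏_{r=0}^{6d}(6w+r))/(∏_{r=0}^{d}(w+r)⁵·∏_{r=1}^{d}(2w+2r−1)) ∈ ℚ(w)
is invariant under the substitution w ↦ −w−d.
-/

open Finset

noncomputable section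

/-- The field ℚ(w). -/
abbrev Qw : Type := RatFunc ℚ

/-- Φ_d, as a rational-function expression evaluated at an arbitrary element of ℚ(w). -/
def Phi (d : ℕ) (ξ : Qw) : Qw :=
  (∏ r ∈ range (6 * d + 1), (6 * ξ + ((r : ℕ) : Qw))) /
    ((∏ r ∈ range (d + 1), (ξ + ((r : ℕ) : Qw)) ^ 5) *
      ∏ r ∈ range d, (2 * ξ + ((2 * r + 1 : ℕ) : Qw)))

theorem statement7 (d : ℕ) :
    Phi d (-RatFunc.X - (d : Qw)) = Phi d RatFunc.X := by
  set X := RatFunc.X (K := ℚ)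
  unfold Phi
  have h1 : ∏ r ∈ range (6 * d + 1), (6 * (-X - (d : Qw)) + ((r : ℕ) : Qw))
      = ∏ r ∈ range (6 * d + 1), -(6 * X + ((r : ℕ) : Qw)) := by
    rw [← Finset.prod_range_reflect (fun r => -(6 * X + ((r : ℕ) : Qw)))]
    refine Finset.prod_congr rfl fun r hr => ?_
    simp only [Finset.mem_range] at hr
    have hr' : r ≤ 6 * d := Nat.lt_succ_iff.mp hr
    have : ((6 * d + 1 - 1 - r : ℕ) : Qw) = 6 * (d : Qw) - r := by
      have : 6 * d + 1 - 1 - r = 6 * d - r := rfl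
      rw [this, Nat.cast_sub hr']
      push_cast; ring
    rw [this]; ring
  have h2 : ∏ r ∈ range (d + 1), ((-X - (d : Qw)) + ((r : ℕ) : Qw)) ^ 5
      = ∏ r ∈ range (d + 1), -((X + ((r : ℕ) : Qw)) ^ 5) := by
    rw [← Finset.prod_range_reflect (fun r => -((X + ((r : ℕ) : Qw)) ^ 5))]
    refine Finset.prod_congr rfl fun r hr => ?_
    simp only [Finset.mem_range] at hr
    have hr' : r ≤ d := Nat.lt_succ_iff.mp hr
    have : ((d + 1 - 1 - r : ℕ) : Qw) = (d : Qw) - r := by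
      have : d + 1 - 1 - r = d - r := rfl
      rw [this, Nat.cast_sub hr']
    rw [this]; ring
  have h3 : ∏ r ∈ range d, (2 * (-X - (d : Qw)) + ((2 * r + 1 : ℕ) : Qw))
      = ∏ r ∈ range d, -(2 * X + ((2 * r + 1 : ℕ) : Qw)) := by
    rw [← Finset.prod_range_reflect (fun r => -(2 * X + ((2 * r + 1 : ℕ) : Qw)))]
    refine Finset.prod_congr rfl fun r hr => ?_
    simp only [Finset.mem_range] at hr
    have hr' : r + 1 ≤ d := hr
    have : ((2 * (d - 1 - r) + 1 : ℕ) : Qw) = 2 * (d : Qw) - 2 * r - 1 := by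
      have h : d - 1 - r = d - (r + 1) := by omega
      rw [h, Nat.cast_add, Nat.cast_mul, Nat.cast_sub hr']
      push_cast; ring
    rw [this]; push_cast; ring
  rw [h1, h2, h3]
  have pn : ∀ (n : ℕ) (f : ℕ → Qw),
      ∏ r ∈ range n, -(f r) = (-1) ^ (range n).card * ∏ r ∈ range n, f r := by
    intro n f
    rw [← Finset.prod_const (-1 : Qw), ← Finset.prod_mul_distrib]
    exact Finset.prod_congr rfl fun r _ => (neg_one_mul _).symm
  rw [pn, pn, pn]
  have e1 : (-1 : Qw) ^ (range (6 * d + 1)).card = -1 := by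
    rw [Finset.card_range]; exact Odd.neg_one_pow ⟨3 * d, by ring⟩
  have e2 : (-1 : Qw) ^ (range (d + 1)).card * (-1 : Qw) ^ (range d).card = -1 := by
    rw [Finset.card_range, Finset.card_range, ← pow_add]
    exact Odd.neg_one_pow ⟨d, by ring⟩
  rw [e1]
  rw [show ((-1:Qw) ^ (range (d+1)).card * ∏ r ∈ range (d+1), (X + ((r:ℕ):Qw))^5) *
      ((-1:Qw) ^ (range d).card * ∏ r ∈ range d, (2 * X + ((2*r+1:ℕ):Qw))) =
      ((-1:Qw) ^ (range (d+1)).card * (-1:Qw) ^ (range d).card) *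
      ((∏ r ∈ range (d+1), (X + ((r:ℕ):Qw))^5) * ∏ r ∈ range d, (2 * X + ((2*r+1:ℕ):Qw))) by ring,
    e2, neg_one_mul, neg_one_mul, neg_div_neg_eq]

end
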